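/- For all k, p > 0 there exists n such that for every regressive function F: S_k([n]) → [n] there exists E ∈ S_p([n]) such that for all x, y ∈ S_k(E), if min(x) = min(y) then F(x) = F(y). -/

import Mathlib

open Set

lemma sInf_insert_above (a : ℕ) (s : Finset ℕ) (h : ∀ b ∈ s, a < b) :
    sInf (↑(insert a s) : Set ℕ) = a := by
  apply le_antisymm
  · exact Nat.sInf_le (by simp)
  · have hne : (↑(insert a s) : Set ℕ).Nonempty := ⟨a, by simp⟩
    have := Nat.sInf_mem hne
    rcases Finset.mem_insert.mp (by exact_mod_cast this) with h1 | h1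
    · omega
    · exact le_of_lt (h _ h1)

/-- Infinite Ramsey theorem for `k`-subsets of `ℕ`. -/
theorem ramseyInf : ∀ (k r : ℕ) (c : Finset ℕ → ℕ) (S : Set ℕ), S.Infinite →
    (∀ x : Finset ℕ, ↑x ⊆ S → x.card = k → c x < r) →
    ∃ T ⊆ S, T.Infinite ∧ ∃ v < r, ∀ x : Finset ℕ, ↑x ⊆ T → x.card = k → c x = v := by
  intro k
  induction k with
  | zero =>
    intro r c S hS hc
    refine ⟨S, le_refl _, hS, c ∅, hc ∅ (by simp) (by simp), ?_⟩
    intro x hx hcard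
    rw [Finset.card_eq_zero.mp hcard]
  | succ k ih =>
    intro r c S hS hc
    -- one thinning step
    have step : ∀ O : {O : Set ℕ // O.Infinite ∧ O ⊆ S},
        ∃ (T : {O : Set ℕ // O.Infinite ∧ O ⊆ S}) (v : ℕ),
          (↑T : Set ℕ) ⊆ ↑O ∩ Set.Ioi (sInf ↑O) ∧ v < r ∧
          ∀ s : Finset ℕ, ↑s ⊆ (↑T : Set ℕ) → s.card = k → c (insert (sInf ↑O) s) = v := by
      rintro ⟨O, hO, hOS⟩
      set a := sInf O with ha
      have haO : a ∈ O := Nat.sInf_mem hO.nonempty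
      have hinf : (O ∩ Set.Ioi a).Infinite := by
        have : O \ Set.Iic a ⊆ O ∩ Set.Ioi a := by
          intro b hb; exact ⟨hb.1, by simpa using hb.2⟩
        exact ((hO.diff (Set.finite_Iic a)).mono this)
      have hc' : ∀ s : Finset ℕ, ↑s ⊆ O ∩ Set.Ioi a → s.card = k →
          (fun s => c (insert a s)) s < r := by
        intro s hs hcard
        apply hc
        · intro b hb
          rcases Finset.mem_insert.mp hb with rfl | hb
          · exact hOS haO
          · exact hOS (hs hb).1
        · rw [Finset.card_insert_of_notMem, hcard]
          intro hmem
          exact lt_irrefl a (hs hmem).2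
      obtain ⟨T, hTsub, hTinf, v, hv, hhom⟩ := ih r (fun s => c (insert a s)) _ hinf hc'
      exact ⟨⟨T, hTinf, fun b hb => hOS (hTsub hb).1⟩, v, hTsub, hv, hhom⟩
    choose next g hsub hvlt hhom using step
    set ch : ℕ → {O : Set ℕ // O.Infinite ∧ O ⊆ S} :=
      fun i => next^[i] ⟨S, hS, le_refl _⟩ with hch
    have chsucc : ∀ i, ch (i + 1) = next (ch i) := by
      intro i; simp [hch, Function.iterate_succ_apply']
    set a : ℕ → ℕ := fun i => sInf ↑(ch i) with haa
    have hstep : ∀ i, (↑(ch (i+1)) : Set ℕ) ⊆ ↑(ch i) ∩ Set.Ioi (a i) := by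
      intro i; rw [chsucc]; exact hsub (ch i)
    have hmem : ∀ i, a i ∈ (↑(ch i) : Set ℕ) := fun i => Nat.sInf_mem (ch i).2.1.nonempty
    have hmono : ∀ i j, i ≤ j → (↑(ch j) : Set ℕ) ⊆ ↑(ch i) := by
      intro i j hij
      induction j with
      | zero => cases Nat.le_zero.mp hij; exact le_refl _
      | succ j ihj =>
        rcases Nat.lt_or_ge i (j+1) with h | h
        · exact subset_trans (subset_trans (hstep j) (inter_subset_left)) (ihj (by omega))
        · have : i = j + 1 := by omega
          subst this; exact le_refl _
    have hamono : ∀ i j, i < j → a i < a j := by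
      intro i j hij
      have : a j ∈ (↑(ch (i+1)) : Set ℕ) := hmono (i+1) j hij (hmem j)
      exact (hstep i (by
        have : (↑(ch (i+1)) : Set ℕ) ⊆ ↑(ch (i+1)) := le_refl _
        exact hmono (i+1) j hij (hmem j))).2
    -- pigeonhole on colors
    have hglt : ∀ i, g (ch i) < r := fun i => hvlt (ch i)
    have : ∃ v ∈ Finset.range r, {i : ℕ | g (ch i) = v}.Infinite := by
      by_contra hcon
      push_neg at hcon
      have hcover : (Set.univ : Set ℕ) ⊆ ⋃ v ∈ (↑(Finset.range r) : Set ℕ), {i : ℕ | g (ch i) = v} := by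
        intro i _
        exact mem_biUnion (by simpa using hglt i) rfl
      have : (Set.univ : Set ℕ).Finite :=
        Set.Finite.subset (Set.Finite.biUnion (Finset.range r).finite_toSet
          (fun v hv => (hcon v (by simpa using hv)))) hcover
      exact Set.infinite_univ this
    obtain ⟨v, hvr, hI⟩ := this
    set I := {i : ℕ | g (ch i) = v} with hIdef
    refine ⟨a '' I, ?_, ?_, v, by simpa using hvr, ?_⟩
    · rintro b ⟨i, _, rfl⟩
      exact (ch i).2.2 (hmem i)
    · exact hI.image (Set.injOn_of_injective (fun i j hij => by
        by_contra h
        rcases Nat.lt_or_ge i j with h' | h'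
        · exact absurd hij (ne_of_lt (hamono i j h'))
        · exact absurd hij.symm (ne_of_lt (hamono j i (by omega)))))
    · intro x hx hcard
      have hxne : (↑x : Set ℕ).Nonempty := by
        rcases Finset.card_pos.mp (by omega : 0 < x.card) with ⟨b, hb⟩
        exact ⟨b, by simpa using hb⟩
      set m := sInf (↑x : Set ℕ) with hm
      have hmx : m ∈ x := by exact_mod_cast Nat.sInf_mem hxne
      obtain ⟨i, hiI, hai⟩ := hx (by exact_mod_cast hmx)
      have herase : (↑(x.erase m) : Set ℕ) ⊆ ↑(ch (i+1)) := by
        intro b hb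
        have hbx : b ∈ x := Finset.mem_of_mem_erase (by exact_mod_cast hb)
        have hbm : b ≠ m := Finset.ne_of_mem_erase (by exact_mod_cast hb)
        obtain ⟨j, hjI, haj⟩ := hx (by exact_mod_cast hbx)
        have hbgt : m < b := lt_of_le_of_ne (Nat.sInf_le (by exact_mod_cast hbx)) (Ne.symm hbm)
        have hij : i < j := by
          by_contra h
          have : a j ≤ a i := by
            rcases Nat.lt_or_ge j i with h' | h'
            · exact le_of_lt (hamono j i h')
            · have : j = i := by omega
              subst this; exact le_refl _
          omega
        exact hmono (i+1) j hij (haj ▸ hmem j)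
      have hec : (x.erase m).card = k := by
        rw [Finset.card_erase_of_mem hmx, hcard]
        omega
      have hthis := hhom (ch i) (x.erase m) (by rw [← chsucc]; exact herase) hec
      have h5 : insert (sInf (↑(ch i) : Set ℕ)) (x.erase m) = x := by
        have h6 : sInf (↑(ch i) : Set ℕ) = m := hai
        rw [h6]; exact Finset.insert_erase hmx
      rw [h5] at hthis
      rw [hthis]; exact hiI

/-- Infinite min-homogeneity for regressive functions. -/
theorem minHomInf (k : ℕ) (hk : 0 < k) (F : Finset ℕ → ℕ)
    (hF : ∀ x : Finset ℕ, x.card = k → 0 < sInf (↑x : Set ℕ) → F x < sInf (↑x : Set ℕ)) :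
    ∃ T : Set ℕ, T.Infinite ∧ T ⊆ Set.Ioi 0 ∧
      ∀ x y : Finset ℕ, ↑x ⊆ T → ↑y ⊆ T → x.card = k → y.card = k →
        sInf (↑x : Set ℕ) = sInf (↑y : Set ℕ) → F x = F y := by
  have step : ∀ O : {O : Set ℕ // O.Infinite ∧ O ⊆ Set.Ioi 0},
      ∃ (T : {O : Set ℕ // O.Infinite ∧ O ⊆ Set.Ioi 0}) (v : ℕ),
        (↑T : Set ℕ) ⊆ ↑O ∩ Set.Ioi (sInf ↑O) ∧
        ∀ s : Finset ℕ, ↑s ⊆ (↑T : Set ℕ) → s.card = k - 1 → F (insert (sInf ↑O) s) = v := by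
    rintro ⟨O, hO, hOpos⟩
    set a := sInf O with ha
    have haO : a ∈ O := Nat.sInf_mem hO.nonempty
    have hapos : 0 < a := hOpos haO
    have hinf : (O ∩ Set.Ioi a).Infinite := by
      have : O \ Set.Iic a ⊆ O ∩ Set.Ioi a := by
        intro b hb; exact ⟨hb.1, by simpa using hb.2⟩
      exact ((hO.diff (Set.finite_Iic a)).mono this)
    have hc' : ∀ s : Finset ℕ, ↑s ⊆ O ∩ Set.Ioi a → s.card = k - 1 →
        (fun s => F (insert a s)) s < a := by
      intro s hs hcard
      have hnotmem : a ∉ s := fun hmem => lt_irrefl a (hs hmem).2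
      have hsinf : sInf (↑(insert a s) : Set ℕ) = a :=
        sInf_insert_above a s (fun b hb => (hs hb).2)
      have hcard' : (insert a s).card = k := by
        rw [Finset.card_insert_of_notMem hnotmem, hcard]; omega
      have := hF (insert a s) hcard' (by rw [hsinf]; exact hapos)
      rwa [hsinf] at this
    obtain ⟨T, hTsub, hTinf, v, hv, hhom⟩ :=
      ramseyInf (k - 1) a (fun s => F (insert a s)) _ hinf hc'
    exact ⟨⟨T, hTinf, fun b hb => lt_trans hapos (hTsub hb).2⟩, v, hTsub, hhom⟩
  choose next g hsub hhom using step
  set ch : ℕ → {O : Set ℕ // O.Infinite ∧ O ⊆ Set.Ioi 0} :=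
    fun i => next^[i] ⟨Set.Ioi 0, Set.Ioi_infinite 0, le_refl _⟩ with hch
  have chsucc : ∀ i, ch (i + 1) = next (ch i) := by
    intro i; simp [hch, Function.iterate_succ_apply']
  set a : ℕ → ℕ := fun i => sInf ↑(ch i) with haa
  have hstep : ∀ i, (↑(ch (i+1)) : Set ℕ) ⊆ ↑(ch i) ∩ Set.Ioi (a i) := by
    intro i; rw [chsucc]; exact hsub (ch i)
  have hmem : ∀ i, a i ∈ (↑(ch i) : Set ℕ) := fun i => Nat.sInf_mem (ch i).2.1.nonempty
  have hmono : ∀ i j, i ≤ j → (↑(ch j) : Set ℕ) ⊆ ↑(ch i) := by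
    intro i j hij
    induction j with
    | zero => cases Nat.le_zero.mp hij; exact le_refl _
    | succ j ihj =>
      rcases Nat.lt_or_ge i (j+1) with h | h
      · exact subset_trans (subset_trans (hstep j) (Set.inter_subset_left)) (ihj (by omega))
      · have : i = j + 1 := by omega
        subst this; exact le_refl _
  have hamono : ∀ i j, i < j → a i < a j := by
    intro i j hij
    exact (hstep i (hmono (i+1) j hij (hmem j))).2
  have hainj : Function.Injective a := by
    intro i j hij
    by_contra h
    rcases Nat.lt_or_ge i j with h' | h'
    · exact absurd hij (ne_of_lt (hamono i j h'))
    · exact absurd hij.symm (ne_of_lt (hamono j i (by omega)))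
  have key : ∀ (i : ℕ) (x : Finset ℕ), ↑x ⊆ Set.range a → x.card = k →
      sInf (↑x : Set ℕ) = a i → F x = g (ch i) := by
    intro i x hx hcard hxi
    have hxne : (↑x : Set ℕ).Nonempty := by
      rcases Finset.card_pos.mp (by omega : 0 < x.card) with ⟨b, hb⟩
      exact ⟨b, by simpa using hb⟩
    set m := sInf (↑x : Set ℕ) with hm
    have hmx : m ∈ x := by exact_mod_cast Nat.sInf_mem hxne
    have herase : (↑(x.erase m) : Set ℕ) ⊆ ↑(ch (i+1)) := by
      intro b hb
      have hbx : b ∈ x := Finset.mem_of_mem_erase (by exact_mod_cast hb)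
      have hbm : b ≠ m := Finset.ne_of_mem_erase (by exact_mod_cast hb)
      obtain ⟨j, haj⟩ := hx (by exact_mod_cast hbx)
      have hbgt : m < b := lt_of_le_of_ne (Nat.sInf_le (by exact_mod_cast hbx)) (Ne.symm hbm)
      have hij : i < j := by
        by_contra h
        have : a j ≤ a i := by
          rcases Nat.lt_or_ge j i with h' | h'
          · exact le_of_lt (hamono j i h')
          · have : j = i := by omega
            subst this; exact le_refl _
        omega
      exact hmono (i+1) j hij (haj ▸ hmem j)
    have hec : (x.erase m).card = k - 1 := by
      rw [Finset.card_erase_of_mem hmx, hcard]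
    have hthis := hhom (ch i) (x.erase m) (by rw [← chsucc]; exact herase) hec
    have h5 : insert (sInf (↑(ch i) : Set ℕ)) (x.erase m) = x := by
      have h6 : sInf (↑(ch i) : Set ℕ) = m := hxi.symm
      rw [h6]; exact Finset.insert_erase hmx
    rw [h5] at hthis
    exact hthis
  refine ⟨Set.range a, ?_, ?_, ?_⟩
  · exact Set.infinite_range_of_injective hainj
  · rintro b ⟨i, rfl⟩
    exact (ch i).2.2 (hmem i)
  · intro x y hx hy hcx hcy hinf
    have hxne : (↑x : Set ℕ).Nonempty := by
      rcases Finset.card_pos.mp (by omega : 0 < x.card) with ⟨b, hb⟩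
      exact ⟨b, by simpa using hb⟩
    have hmx : sInf (↑x : Set ℕ) ∈ x := by exact_mod_cast Nat.sInf_mem hxne
    obtain ⟨i, hai⟩ := hx (by exact_mod_cast hmx)
    rw [key i x hx hcx hai.symm, key i y hy hcy (by rw [← hinf, hai])]

theorem stmt_4 (k p : ℕ) (hk : 0 < k) (hp : 0 < p) :
    ∃ n : ℕ, ∀ F : Finset ℕ → ℕ,
      (∀ x : Finset ℕ, x ⊆ Finset.range n → x.card = k → F x < n) →
      (∀ x : Finset ℕ, x ⊆ Finset.range n → x.card = k →
        0 < sInf (↑x : Set ℕ) → F x < sInf (↑x : Set ℕ)) →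
      ∃ E : Finset ℕ, E ⊆ Finset.range n ∧ E.card = p ∧
        ∀ x y : Finset ℕ, x ⊆ E → y ⊆ E → x.card = k → y.card = k →
          sInf (↑x : Set ℕ) = sInf (↑y : Set ℕ) → F x = F y := by
  by_contra hcon
  push_neg at hcon
  choose Fb h1 h2 h3 using hcon
  set U : Ultrafilter ℕ := Filter.hyperfilter ℕ with hU
  have hIoiU : ∀ t : ℕ, {n | t < n} ∈ U := by
    intro t
    apply Filter.hyperfilter_le_cofinite
    rw [Filter.mem_cofinite]
    have : {n : ℕ | t < n}ᶜ = Set.Iic t := by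
      ext b; simp [Set.mem_Iic, not_lt]
    rw [this]; exact Set.finite_Iic t
  have key : ∀ x : Finset ℕ, x.card = k → 0 < sInf (↑x : Set ℕ) →
      ∃ v, v < sInf (↑x : Set ℕ) ∧ {n | Fb n x = v} ∈ U := by
    intro x hxc hxpos
    set m := sInf (↑x : Set ℕ) with hm
    have hA : {n | x.sup id < n} ∈ U := hIoiU _
    have hsub : {n | x.sup id < n} ⊆ ⋃ v ∈ Set.Iio m, {n | Fb n x = v} := by
      intro n hn
      have hxr : x ⊆ Finset.range n := by
        intro b hb
        exact Finset.mem_range.mpr (lt_of_le_of_lt (Finset.le_sup (f := id) hb) hn)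
      have := h2 n x hxr hxc hxpos
      exact Set.mem_biUnion this rfl
    have hU2 : (⋃ v ∈ Set.Iio m, {n | Fb n x = v}) ∈ U := Filter.mem_of_superset hA hsub
    obtain ⟨v, hv, hvU⟩ := (Ultrafilter.finite_biUnion_mem_iff (Set.finite_Iio m)).mp hU2
    exact ⟨v, hv, hvU⟩
  choose! G hG1 hG2 using key
  obtain ⟨T, hTinf, hTpos, hThom⟩ := minHomInf k hk G hG1
  obtain ⟨E, hET, hEc⟩ := hTinf.exists_subset_card_eq p
  have hposx : ∀ x : Finset ℕ, x ⊆ E → x.card = k → 0 < sInf (↑x : Set ℕ) := by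
    intro x hxE hxc
    have hxne : (↑x : Set ℕ).Nonempty := by
      rcases Finset.card_pos.mp (by omega : 0 < x.card) with ⟨b, hb⟩
      exact ⟨b, by simpa using hb⟩
    have hmx : sInf (↑x : Set ℕ) ∈ x := by exact_mod_cast Nat.sInf_mem hxne
    exact hTpos (hET (by exact_mod_cast hxE hmx))
  have hfib : ∀ x ∈ E.powersetCard k, {n | Fb n x = G x} ∈ U := by
    intro x hx
    rw [Finset.mem_powersetCard] at hx
    exact hG2 x hx.2 (hposx x hx.1 hx.2)
  have hBall : (⋂ x ∈ E.powersetCard k, {n | Fb n x = G x}) ∈ U :=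
    (Filter.biInter_finset_mem _).mpr hfib
  have hBig : {n | E.sup id < n} ∈ U := hIoiU _
  obtain ⟨n, hn1, hn2⟩ := Filter.nonempty_of_mem (Filter.inter_mem hBall hBig)
  have hEr : E ⊆ Finset.range n := by
    intro b hb
    exact Finset.mem_range.mpr (lt_of_le_of_lt (Finset.le_sup (f := id) hb) hn2)
  obtain ⟨x, y, hxE, hyE, hxc, hyc, hinfeq, hne⟩ := h3 n E hEr hEc
  apply hne
  have hval : ∀ z : Finset ℕ, z ⊆ E → z.card = k → Fb n z = G z := by
    intro z hzE hzc
    exact Set.mem_iInter₂.mp hn1 z (Finset.mem_powersetCard.mpr ⟨hzE, hzc⟩)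
  have hcoe : ∀ z : Finset ℕ, z ⊆ E → (↑z : Set ℕ) ⊆ T := by
    intro z hzE b hb
    exact hET (by exact_mod_cast hzE (by exact_mod_cast hb))
  rw [hval x hxE hxc, hval y hyE hyc]
  exact hThom x y (hcoe x hxE) (hcoe y hyE) hxc hyc hinfeq
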